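/- Let f_d(x) = λ((βx+1)/(x+γ))^d with βγ > 1 and λ, d > 0. Then f_d''(x) has the same sign as d(βγ−1) − (βγ+1) − 2βx; in particular if d < (βγ+1)/(βγ−1) then f_d is strictly concave on (0, ∞) and has a unique positive fixed point. -/

import Mathlib

theorem stmt_9 (β γ lam d : ℝ) (hβ : 0 < β) (hγ : 0 < γ) (hlam : 0 < lam)
    (h1 : 1 < β * γ) (hd : 0 < d) :
    (∀ x : ℝ, 0 < x →
        Real.sign (deriv (deriv (fun y : ℝ => lam * ((β * y + 1) / (y + γ)) ^ d)) x) =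
          Real.sign (d * (β * γ - 1) - (β * γ + 1) - 2 * β * x)) ∧
    (d < (β * γ + 1) / (β * γ - 1) →
      StrictConcaveOn ℝ (Set.Ioi 0) (fun y : ℝ => lam * ((β * y + 1) / (y + γ)) ^ d) ∧
      ∃! x : ℝ, 0 < x ∧ lam * ((β * x + 1) / (x + γ)) ^ d = x) := by
  set f : ℝ → ℝ := fun y : ℝ => lam * ((β * y + 1) / (y + γ)) ^ d with hfdef
  set c : ℝ := d * (β * γ - 1) with hcdef
  have hc : 0 < c := mul_pos hd (by linarith)
  -- basic positivity facts
  have hnum : ∀ x : ℝ, 0 < x → 0 < β * x + 1 := fun x hx => by nlinarith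
  have hden : ∀ x : ℝ, 0 ≤ x → 0 < x + γ := fun x hx => by linarith
  have hupos : ∀ x : ℝ, 0 < x → 0 < (β * x + 1) / (x + γ) :=
    fun x hx => div_pos (hnum x hx) (hden x hx.le)
  have hfpos : ∀ x : ℝ, 0 < x → 0 < f x :=
    fun x hx => mul_pos hlam (Real.rpow_pos_of_pos (hupos x hx) d)
  -- derivative of f
  have hderiv1 : ∀ x : ℝ, 0 < x →
      HasDerivAt f (c * f x / ((β * x + 1) * (x + γ))) x := by
    intro x hx
    have hb : (0:ℝ) < β * x + 1 := hnum x hx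
    have hg : (0:ℝ) < x + γ := hden x hx.le
    have hu : HasDerivAt (fun y : ℝ => (β * y + 1) / (y + γ))
        ((β * γ - 1) / (x + γ) ^ 2) x := by
      have h1' : HasDerivAt (fun y : ℝ => β * y + 1) β x := by
        simpa using ((hasDerivAt_id x).const_mul β).add_const 1
      have h2' : HasDerivAt (fun y : ℝ => y + γ) 1 x := (hasDerivAt_id x).add_const γ
      have := h1'.div h2' (ne_of_gt hg)
      refine this.congr_deriv (Eq.symm ?_)
      ring
    have hr := (hu.rpow_const (p := d) (Or.inl (ne_of_gt (hupos x hx)))).const_mul lam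
    refine hr.congr_deriv (Eq.symm ?_)
    have hu0 : (0:ℝ) < (β * x + 1) / (x + γ) := hupos x hx
    rw [Real.rpow_sub hu0, Real.rpow_one]
    have hfx : f x = lam * ((β * x + 1) / (x + γ)) ^ d := rfl
    rw [hfx, hcdef]
    generalize ((β * x + 1) / (x + γ)) ^ d = A
    field_simp
  set P : ℝ → ℝ := fun y : ℝ => (β * y + 1) * (y + γ) with hPdef
  set G : ℝ → ℝ := fun y : ℝ => c * f y / P y with hGdef
  have hderivf : ∀ x : ℝ, 0 < x → deriv f x = G x := by
    intro x hx
    exact (hderiv1 x hx).deriv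
  -- second derivative
  have hderiv2 : ∀ x : ℝ, 0 < x →
      HasDerivAt G (c * f x * (c - (β * γ + 1) - 2 * β * x) / (P x) ^ 2) x := by
    intro x hx
    have hb : (0:ℝ) < β * x + 1 := hnum x hx
    have hg : (0:ℝ) < x + γ := hden x hx.le
    have hPx : (0:ℝ) < P x := mul_pos hb hg
    have hP : HasDerivAt P (β * (x + γ) + (β * x + 1) * 1) x := by
      have h1' : HasDerivAt (fun y : ℝ => β * y + 1) β x := by
        simpa using ((hasDerivAt_id x).const_mul β).add_const 1
      have h2' : HasDerivAt (fun y : ℝ => y + γ) 1 x := (hasDerivAt_id x).add_const γ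
      exact h1'.mul h2'
    have := ((hderiv1 x hx).const_mul c).div hP (ne_of_gt hPx)
    refine this.congr_deriv (Eq.symm ?_)
    have hfx := hfpos x hx
    field_simp
    ring
  have hderiv2' : ∀ x : ℝ, 0 < x →
      deriv (deriv f) x = c * f x * (c - (β * γ + 1) - 2 * β * x) / (P x) ^ 2 := by
    intro x hx
    have hev : deriv f =ᶠ[nhds x] G :=
      Filter.eventuallyEq_of_mem (Ioi_mem_nhds hx) (fun y hy => hderivf y hy)
    rw [hev.deriv_eq]
    exact (hderiv2 x hx).deriv
  -- sign statement
  have hsign : ∀ x : ℝ, 0 < x →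
      Real.sign (deriv (deriv f) x) = Real.sign (c - (β * γ + 1) - 2 * β * x) := by
    intro x hx
    have hb : (0:ℝ) < β * x + 1 := hnum x hx
    have hg : (0:ℝ) < x + γ := hden x hx.le
    have hPx : (0:ℝ) < P x := mul_pos hb hg
    have hK : 0 < c * f x / (P x) ^ 2 :=
      div_pos (mul_pos hc (hfpos x hx)) (by positivity)
    rw [hderiv2' x hx]
    have hrw : c * f x * (c - (β * γ + 1) - 2 * β * x) / (P x) ^ 2
        = (c * f x / (P x) ^ 2) * (c - (β * γ + 1) - 2 * β * x) := by ring
    rw [hrw]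
    rcases lt_trichotomy (c - (β * γ + 1) - 2 * β * x) 0 with h | h | h
    · rw [Real.sign_of_neg h, Real.sign_of_neg (mul_neg_of_pos_of_neg hK h)]
    · rw [h, mul_zero, Real.sign_zero]
    · rw [Real.sign_of_pos h, Real.sign_of_pos (mul_pos hK h)]
  refine ⟨hsign, ?_⟩
  intro hdlt
  -- continuity of f on Ici 0
  have hcont : ContinuousOn f (Set.Ici 0) := by
    apply ContinuousOn.mul continuousOn_const
    apply ContinuousOn.rpow_const
    · exact (ContinuousOn.div (by fun_prop) (by fun_prop)
        (fun y hy => ne_of_gt (hden y hy)))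
    · intro y hy; exact Or.inr hd.le
  -- strict concavity on Ici 0
  have hconcIci : StrictConcaveOn ℝ (Set.Ici 0) f := by
    apply strictConcaveOn_of_deriv2_neg (convex_Ici 0) hcont
    intro x hx
    rw [interior_Ici] at hx
    have hx : (0:ℝ) < x := hx
    show deriv (deriv f) x < 0
    rw [hderiv2' x hx]
    have hb : (0:ℝ) < β * x + 1 := hnum x hx
    have hg : (0:ℝ) < x + γ := hden x hx.le
    have hPx : (0:ℝ) < P x := mul_pos hb hg
    have hT : c - (β * γ + 1) - 2 * β * x < 0 := by
      have : c < β * γ + 1 := by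
        rw [hcdef]
        calc d * (β * γ - 1) < ((β * γ + 1) / (β * γ - 1)) * (β * γ - 1) := by
              apply mul_lt_mul_of_pos_right hdlt (by linarith)
          _ = β * γ + 1 := by
              rw [div_mul_cancel₀]
              linarith
      nlinarith
    have : c * f x * (c - (β * γ + 1) - 2 * β * x) < 0 :=
      mul_neg_of_pos_of_neg (mul_pos hc (hfpos x hx)) hT
    exact div_neg_of_neg_of_pos this (by positivity)
  have hconc : StrictConcaveOn ℝ (Set.Ioi 0) f :=
    hconcIci.subset Set.Ioi_subset_Ici_self (convex_Ioi 0)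
  refine ⟨hconc, ?_⟩
  -- f 0 > 0
  have hf0 : 0 < f 0 := by
    have : (0:ℝ) < (β * 0 + 1) / (0 + γ) := by
      apply div_pos <;> linarith
    exact mul_pos hlam (Real.rpow_pos_of_pos this d)
  -- uniqueness helper
  have huniq : ∀ a b : ℝ, 0 < a → 0 < b → f a = a → f b = b → a < b → False := by
    intro a b ha hb hfa hfb hab
    have hs : 0 < a / b := div_pos ha hb
    have ht : 0 < (b - a) / b := div_pos (by linarith) hb
    have hsum : (b - a) / b + a / b = 1 := by field_simp; ring
    have := hconcIci.2 (Set.self_mem_Ici) (Set.mem_Ici.mpr hb.le)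
      (by exact fun h => by linarith [h ▸ hb] : (0:ℝ) ≠ b) ht hs hsum
    simp only [smul_eq_mul, mul_zero, zero_add] at this
    have hxa : a / b * b = a := by field_simp
    rw [hxa, hfa, hfb] at this
    nlinarith [mul_pos ht hf0]
  -- existence: bound f x < lam * β ^ d
  set M : ℝ := lam * β ^ d with hMdef
  have hM : 0 < M := mul_pos hlam (Real.rpow_pos_of_pos hβ d)
  have hfM : f M < M := by
    have hb : (0:ℝ) < β * M + 1 := hnum M hM
    have hg : (0:ℝ) < M + γ := hden M hM.le
    have hu : (β * M + 1) / (M + γ) < β := by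
      rw [div_lt_iff₀ hg]
      nlinarith
    have := Real.rpow_lt_rpow (le_of_lt (hupos M hM)) hu hd
    calc f M = lam * ((β * M + 1) / (M + γ)) ^ d := rfl
      _ < lam * β ^ d := by exact mul_lt_mul_of_pos_left this hlam
      _ = M := rfl
  have hcontM : ContinuousOn (fun x => f x - x) (Set.Icc 0 M) := by
    apply ContinuousOn.sub (hcont.mono (fun y hy => hy.1)) continuousOn_id
  have hivt : (0:ℝ) ∈ Set.Ioo (f M - M) (f 0 - 0) := by
    constructor
    · linarith
    · simpa using hf0
  obtain ⟨x, hxmem, hxval⟩ := intermediate_value_Ioo' hM.le hcontM hivt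
  have hx0 : 0 < x := hxmem.1
  have hxfix : f x = x := by
    have h' : f x - x = 0 := hxval
    linarith
  refine ⟨x, ⟨hx0, hxfix⟩, ?_⟩
  rintro y ⟨hy0, hyfix⟩
  rcases lt_trichotomy y x with h | h | h
  · exact absurd (huniq y x hy0 hx0 hyfix hxfix h) not_false
  · exact h
  · exact absurd (huniq x y hx0 hy0 hxfix hyfix h) not_false
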